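/- Let E : V → V be a bounded self-adjoint operator on a real Hilbert space V, and suppose a quadratic identity ⟨E x, 𝒜x⟩ = -2a q(x)² holds on Dom(𝒜) for a continuous linear functional q and a > 0. If operators E_k and E_{k,l} are self-adjoint with ⟨E_k x, 𝒜x⟩ = -2a q_k(x)² and ⟨E_{k,l} x, 𝒜x⟩ = -4a q_k(x)q_l(x), and E = ∑_k c_k² E_k + ∑_{k<l} c_k c_l E_{k,l} converges in operator norm, then ⟨E x, 𝒜x⟩ = -2a (∑_k c_k q_k(x))² for all x ∈ Dom(𝒜), where the sums converge appropriately. -/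
import Mathlib

open scoped RealInnerProductSpace

lemma sq_sum_expand {N : ℕ} (f : Fin N → ℝ) :
    (∑ k, f k) ^ 2 = ∑ k, f k ^ 2
      + 2 * ∑ k, ∑ l ∈ Finset.univ.filter (fun l => k < l), f k * f l := by
  classical
  have h1 : (∑ k, f k) ^ 2 = ∑ k, ∑ l, f k * f l := by
    rw [sq, Finset.sum_mul_sum]
  have hsplit : ∀ k : Fin N, (∑ l, f k * f l)
      = f k ^ 2 + (∑ l ∈ Finset.univ.filter (fun l => k < l), f k * f l)
        + ∑ l ∈ Finset.univ.filter (fun l => l < k), f k * f l := by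
    intro k
    rw [← Finset.sum_filter_add_sum_filter_not Finset.univ (fun l => k < l) (fun l => f k * f l)]
    have : Finset.univ.filter (fun l => ¬ k < l)
        = insert k (Finset.univ.filter (fun l => l < k)) := by
      ext l
      simp [not_lt, le_iff_lt_or_eq, or_comm, eq_comm]
    rw [this, Finset.sum_insert (by simp)]
    ring
  have hswap : (∑ k, ∑ l ∈ Finset.univ.filter (fun l => l < k), f k * f l)
      = ∑ k, ∑ l ∈ Finset.univ.filter (fun l => k < l), f k * f l := by
    rw [Finset.sum_comm' (s' := fun l => Finset.univ.filter (fun k => l < k))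
      (t' := Finset.univ) (by intro x y; simp)]
    simp [mul_comm]
  rw [h1]
  simp only [hsplit]
  rw [Finset.sum_add_distrib, Finset.sum_add_distrib, hswap]
  ring

/-- Abstract (finite-index) version of the lemma on properties of the operator `E`. -/
theorem stmt17 {V : Type*} [NormedAddCommGroup V] [InnerProductSpace ℝ V]
    (N : ℕ) (𝒜 : V → V) (Dom : Set V) (a : ℝ) (ha : 0 < a)
    (q : Fin N → V →L[ℝ] ℝ) (c : Fin N → ℝ)
    (Ek : Fin N → V →L[ℝ] V) (Ekl : Fin N → Fin N → V →L[ℝ] V)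
    (hEk_sa : ∀ k, ∀ x y : V, ⟪Ek k x, y⟫ = ⟪x, Ek k y⟫)
    (hEkl_sa : ∀ k l, ∀ x y : V, ⟪Ekl k l x, y⟫ = ⟪x, Ekl k l y⟫)
    (hEk : ∀ k, ∀ x ∈ Dom, ⟪Ek k x, 𝒜 x⟫ = -2 * a * (q k x) ^ 2)
    (hEkl : ∀ k l, ∀ x ∈ Dom, ⟪Ekl k l x, 𝒜 x⟫ = -4 * a * (q k x) * (q l x))
    (E : V →L[ℝ] V)
    (hE : E = (∑ k, (c k) ^ 2 • Ek k)
        + ∑ k, ∑ l ∈ Finset.univ.filter (fun l => k < l), (c k * c l) • Ekl k l) :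
    ∀ x ∈ Dom, ⟪E x, 𝒜 x⟫ = -2 * a * (∑ k, c k * q k x) ^ 2 := by
  intro x hx
  have hEx : E x = (∑ k, (c k) ^ 2 • Ek k x)
      + ∑ k, ∑ l ∈ Finset.univ.filter (fun l => k < l), (c k * c l) • Ekl k l x := by
    rw [hE]; simp
  rw [hEx, inner_add_left, sum_inner, sum_inner]
  simp only [inner_smul_left, RCLike.conj_to_real, sum_inner]
  rw [sq_sum_expand (fun k => c k * q k x)]
  have h1 : ∀ k : Fin N, c k ^ 2 * ⟪Ek k x, 𝒜 x⟫ = c k ^ 2 * (-2 * a * (q k x) ^ 2) := by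
    intro k; rw [hEk k x hx]
  have h2 : ∀ k : Fin N, (∑ l ∈ Finset.univ.filter (fun l => k < l),
      (c k * c l) * ⟪Ekl k l x, 𝒜 x⟫)
      = ∑ l ∈ Finset.univ.filter (fun l => k < l),
        (c k * c l) * (-4 * a * (q k x) * (q l x)) := by
    intro k
    exact Finset.sum_congr rfl fun l _ => by rw [hEkl k l x hx]
  rw [Finset.sum_congr rfl fun k _ => h1 k, Finset.sum_congr rfl fun k _ => h2 k]
  rw [mul_add, Finset.mul_sum, Finset.mul_sum]
  congr 1
  · exact Finset.sum_congr rfl fun k _ => by ring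
  · rw [← Finset.mul_sum, Finset.mul_sum, Finset.mul_sum]
    refine Finset.sum_congr rfl fun k _ => ?_
    rw [Finset.mul_sum, Finset.mul_sum]
    exact Finset.sum_congr rfl fun l _ => by ring
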